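/- Let G be a quiver and let p : D ⥤ Paths G be a ULF functor into the free category on G. Define the quiver H whose vertices are the objects of D and whose edges from X to Y are the morphisms α : X ⟶ Y of D such that p.map α is a path of length 1. Then the canonical functor Paths H ⥤ D, which is the identity on objects and sends a path of edges to the composite in D of its constituent morphisms, is an isomorphism of categories (bijective on objects and bijective on each hom-set); in particular every morphism of D factors uniquely as a composite of morphisms lying over single edges of G. -/

import Mathlib

open CategoryTheory

universe v u v' u'

/-- A functor `p : D ⥤ C` has the unique lifting of factorizations property (is ULF) if
every factorization of the image of a morphism lifts uniquely. -/
def IsULF {D : Type u} {C : Type u'} [Category.{v} D] [Category.{v'} C] (p : D ⥤ C) : Prop :=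
  ∀ ⦃X Y : D⦄ (α : X ⟶ Y) ⦃B : C⦄ (u : p.obj X ⟶ B) (v : B ⟶ p.obj Y),
    p.map α = u ≫ v →
    ∃! t : Σ (Z : D), (X ⟶ Z) × (Z ⟶ Y),
      ∃ e : p.obj t.1 = B,
        t.2.1 ≫ t.2.2 = α ∧ p.map t.2.1 ≫ eqToHom e = u ∧ p.map t.2.2 = eqToHom e ≫ v

variable {D : Type u} {G : Type u'} [Category.{v} D] [Quiver.{v' + 1} G]

/-- The vertices of the quiver of generators associated to a functor `p : D ⥤ Paths G`:
they are just the objects of `D`. -/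
structure Vert (p : D ⥤ Paths G) where
  obj : D

/-- The quiver of generators associated to `p : D ⥤ Paths G`: edges from `X` to `Y` are the
morphisms `α : X ⟶ Y` of `D` such that `p.map α` is a path of length 1. -/
instance (p : D ⥤ Paths G) : Quiver (Vert p) :=
  ⟨fun X Y => { α : X.obj ⟶ Y.obj // Quiver.Path.length (p.map α) = 1 }⟩

/-- The canonical functor from the free category on the quiver of generators to `D`:
it is the identity on objects and sends a path of edges to the composite in `D` of its
constituent morphisms. -/
def canonical (p : D ⥤ Paths G) : Paths (Vert p) ⥤ D :=
  Paths.lift { obj := fun X => X.obj, map := fun e => e.val }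

lemma path_len_zero {x y : Paths G} (f : x ⟶ y) (h : Quiver.Path.length f = 0) :
    ∃ e : x = y, f = eqToHom e := by
  have e : x = y := Quiver.Path.eq_of_length_zero (V := G) f h
  subst e
  refine ⟨rfl, ?_⟩
  have h2 : f = Quiver.Path.nil := Quiver.Path.eq_nil_of_length_zero (V := G) f h
  rw [h2]; rfl

lemma path_len_succ {n : ℕ} {x y : Paths G} (f : x ⟶ y) (h : Quiver.Path.length f = n + 1) :
    ∃ (b : G) (q : Quiver.Path (V := G) x b) (g : b ⟶ y),
      f = q.cons g ∧ q.length = n := by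
  change Quiver.Path (V := G) x y at f
  cases f with
  | nil => simp [Quiver.Path.length] at h
  | cons q g => exact ⟨_, q, g, rfl, by simpa [Quiver.Path.length] using h⟩

lemma len_eqToHom {x y : Paths G} (e : x = y) :
    Quiver.Path.length (eqToHom e : x ⟶ y) = 0 := by
  subst e; rfl

lemma len_comp {x y z : Paths G} (f : x ⟶ y) (g : y ⟶ z) :
    Quiver.Path.length (f ≫ g) = Quiver.Path.length f + Quiver.Path.length g :=
  Quiver.Path.length_comp (V := G) f g

lemma auxF {x b₁ b₂ y : Paths G} (u₁ : x ⟶ b₁) (v₁ : b₁ ⟶ y) (u₂ : x ⟶ b₂) (v₂ : b₂ ⟶ y)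
    (h₁ : Quiver.Path.length v₁ = 1) (h₂ : Quiver.Path.length v₂ = 1)
    (h : u₁ ≫ v₁ = u₂ ≫ v₂) :
    ∃ e : b₁ = b₂, u₂ = u₁ ≫ eqToHom e ∧ v₂ = eqToHom e.symm ≫ v₁ := by
  obtain ⟨m₁, q₁, g₁, hd₁, hq₁⟩ := path_len_succ v₁ h₁
  obtain ⟨m₂, q₂, g₂, hd₂, hq₂⟩ := path_len_succ v₂ h₂
  subst hd₁ hd₂
  have e₁ : b₁ = m₁ := Quiver.Path.eq_of_length_zero (V := G) q₁ hq₁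
  have e₂ : b₂ = m₂ := Quiver.Path.eq_of_length_zero (V := G) q₂ hq₂
  subst e₁ e₂
  have hn₁ : q₁ = Quiver.Path.nil := Quiver.Path.eq_nil_of_length_zero (V := G) q₁ hq₁
  have hn₂ : q₂ = Quiver.Path.nil := Quiver.Path.eq_nil_of_length_zero (V := G) q₂ hq₂
  subst hn₁ hn₂
  have h' : Quiver.Path.comp (V := G) u₁ (Quiver.Path.cons Quiver.Path.nil g₁)
      = Quiver.Path.comp (V := G) u₂ (Quiver.Path.cons Quiver.Path.nil g₂) := h
  change Quiver.Path.cons (V := G) u₁ g₁ = Quiver.Path.cons (V := G) u₂ g₂ at h'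
  have eb : b₁ = b₂ := Quiver.Path.obj_eq_of_cons_eq_cons (V := G) h'
  subst eb
  have hu : u₁ = u₂ := eq_of_heq (Quiver.Path.heq_of_cons_eq_cons (V := G) h')
  have hg : g₁ = g₂ := eq_of_heq (Quiver.Path.hom_heq_of_cons_eq_cons (V := G) h')
  subst hu hg
  exact ⟨rfl, by simp, by simp⟩

lemma len_map (p : D ⥤ Paths G) :
    ∀ {X Y : Paths (Vert p)} (f : X ⟶ Y),
      Quiver.Path.length (p.map ((canonical p).map f)) = Quiver.Path.length f := by
  intro X Y f
  change Quiver.Path (V := Vert p) X Y at f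
  induction f with
  | nil =>
    show Quiver.Path.length (p.map ((canonical p).map (𝟙 X))) = 0
    rw [(canonical p).map_id, p.map_id]
    rfl
  | cons q e ih =>
    have hc : (canonical p).map (Quiver.Path.cons q e)
        = (canonical p).map q ≫ e.val := rfl
    erw [hc, p.map_comp, len_comp, ih, e.property, Quiver.Path.length_cons]

lemma map_len_zero {p : D ⥤ Paths G} (hp : IsULF p) {X Y : D} (α : X ⟶ Y)
    (h : Quiver.Path.length (p.map α) = 0) : ∃ e : X = Y, α = eqToHom e := by
  obtain ⟨e, hm⟩ := path_len_zero (G := G) (p.map α) h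
  obtain ⟨t, ht, huniq⟩ := hp α (eqToHom e) (𝟙 _) (by rw [hm]; simp)
  have h1 := huniq ⟨Y, α, 𝟙 Y⟩ ⟨rfl, by simp, by simp [hm], by simp⟩
  have h2 := huniq ⟨X, 𝟙 X, α⟩ ⟨e, by simp, by simp, by simp [hm]⟩
  have h12 : (⟨Y, α, 𝟙 Y⟩ : Σ (Z : D), (X ⟶ Z) × (Z ⟶ Y)) = ⟨X, 𝟙 X, α⟩ :=
    h1.trans h2.symm
  obtain ⟨hZ, hpr⟩ := Sigma.mk.inj_iff.mp h12
  subst hZ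
  rw [heq_iff_eq, Prod.mk.injEq] at hpr
  exact ⟨rfl, by simpa using hpr.1⟩

lemma surj_aux {p : D ⥤ Paths G} (hp : IsULF p) :
    ∀ (n : ℕ) (X Y : Vert p) (α : X.obj ⟶ Y.obj),
      Quiver.Path.length (p.map α) = n →
      ∃ f : Quiver.Path (V := Vert p) X Y, (canonical p).map f = α := by
  intro n
  induction n with
  | zero =>
    intro X Y α h
    obtain ⟨e, rfl⟩ := map_len_zero hp α h
    obtain ⟨x⟩ := X
    obtain ⟨y⟩ := Y
    cases e
    exact ⟨Quiver.Path.nil, rfl⟩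
  | succ n ih =>
    intro X Y α h
    obtain ⟨b, q, g, hd, hq⟩ := path_len_succ (G := G) (p.map α) h
    have hcomp : Quiver.Path.comp (V := G) q (Quiver.Path.cons Quiver.Path.nil g)
        = Quiver.Path.cons q g := by
      rfl
    obtain ⟨⟨Z, β, γ⟩, ⟨e, hβγ, hβ, hγ⟩, -⟩ :=
      hp α (B := b) q (Quiver.Path.cons Quiver.Path.nil g)
        (by rw [hd]; exact hcomp.symm)
    have hlβ : Quiver.Path.length (p.map β) = n := by
      have hl := congrArg Quiver.Path.length hβ
      erw [len_comp, len_eqToHom] at hl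
      simpa [hq] using hl
    have hlγ : Quiver.Path.length (p.map γ) = 1 := by
      have hl := congrArg Quiver.Path.length hγ
      erw [len_comp, len_eqToHom] at hl
      simpa [Quiver.Path.length] using hl
    obtain ⟨f', hf'⟩ := ih X ⟨Z⟩ β hlβ
    refine ⟨Quiver.Path.cons f' ⟨γ, hlγ⟩, ?_⟩
    have hc : (canonical p).map (Quiver.Path.cons f' ⟨γ, hlγ⟩)
        = (canonical p).map f' ≫ γ := rfl
    erw [hc, hf', hβγ]

lemma inj_aux {p : D ⥤ Paths G} (hp : IsULF p) :
    ∀ (n : ℕ) (X Y : Vert p) (f₁ f₂ : Quiver.Path (V := Vert p) X Y),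
      Quiver.Path.length f₁ = n → Quiver.Path.length f₂ = n →
      (canonical p).map f₁ = (canonical p).map f₂ → f₁ = f₂ := by
  intro n
  induction n with
  | zero =>
    intro X Y f₁ f₂ h₁ h₂ _
    have e : X = Y := Quiver.Path.eq_of_length_zero (V := Vert p) f₁ h₁
    subst e
    rw [Quiver.Path.eq_nil_of_length_zero (V := Vert p) f₁ h₁,
      Quiver.Path.eq_nil_of_length_zero (V := Vert p) f₂ h₂]
  | succ n ih =>
    intro X Y f₁ f₂ h₁ h₂ hmap
    cases f₁ with
    | nil => simp at h₁
    | @cons W₁ _ q₁ e₁ =>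
      cases f₂ with
      | nil => simp at h₂
      | @cons W₂ _ q₂ e₂ =>
        have hc₁ : (canonical p).map (Quiver.Path.cons q₁ e₁)
            = (canonical p).map q₁ ≫ e₁.val := rfl
        have hc₂ : (canonical p).map (Quiver.Path.cons q₂ e₂)
            = (canonical p).map q₂ ≫ e₂.val := rfl
        have hfact : p.map ((canonical p).map q₁) ≫ p.map e₁.val
            = p.map ((canonical p).map q₂) ≫ p.map e₂.val := by
          erw [← p.map_comp, ← p.map_comp, ← hc₁, ← hc₂, hmap]
        obtain ⟨eb, hu, hv⟩ := auxF _ _ _ _ e₁.property e₂.property hfact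
        obtain ⟨t, ht, huniq⟩ := hp ((canonical p).map q₁ ≫ e₁.val)
          (p.map ((canonical p).map q₁)) (p.map e₁.val) (p.map_comp _ _)
        have h1 := huniq ⟨W₁.obj, (canonical p).map q₁, e₁.val⟩
          ⟨rfl, rfl, by erw [eqToHom_refl, Category.comp_id]; rfl, by erw [eqToHom_refl, Category.id_comp]; rfl⟩
        have h2 := huniq ⟨W₂.obj, (canonical p).map q₂, e₂.val⟩
          ⟨eb.symm, by erw [← hc₂, ← hmap, hc₁], by erw [hu, Category.assoc, eqToHom_trans, eqToHom_refl, Category.comp_id], hv⟩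
        have h12 := h1.trans h2.symm
        have hobj : W₁.obj = W₂.obj := congrArg Sigma.fst h12
        obtain ⟨w₁⟩ := W₁
        obtain ⟨w₂⟩ := W₂
        cases hobj
        obtain ⟨-, hpr⟩ := Sigma.mk.inj_iff.mp h12
        erw [heq_iff_eq, Prod.mk.injEq] at hpr
        obtain ⟨hq, he⟩ := hpr
        have hq12 : q₁ = q₂ := ih X ⟨w₁⟩ q₁ q₂ (by simpa using h₁) (by simpa using h₂) hq
        have he12 : e₁ = e₂ := Subtype.ext he
        rw [hq12, he12]

/-- If `p : D ⥤ Paths G` is ULF, then the canonical functor `Paths (Vert p) ⥤ D` is an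
isomorphism of categories: bijective on objects and bijective on each hom-set.
In particular every morphism of `D` factors uniquely as a composite of morphisms lying
over single edges of `G`. -/
theorem canonical_isIso (p : D ⥤ Paths G) (hp : IsULF p) :
    Function.Bijective (canonical p).obj ∧
      ∀ X Y : Paths (Vert p),
        Function.Bijective (fun f : X ⟶ Y => (canonical p).map f) := by

  constructor
  · constructor
    · intro a b h
      obtain ⟨x⟩ := a
      obtain ⟨y⟩ := b
      exact congrArg Vert.mk h
    · intro d
      exact ⟨⟨d⟩, rfl⟩
  · intro X Y
    constructor
    · intro f₁ f₂ h
      have h' : (canonical p).map f₁ = (canonical p).map f₂ := h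
      have hl : Quiver.Path.length f₂ = Quiver.Path.length f₁ := by
        rw [← len_map p f₁, ← len_map p f₂, h']
      exact inj_aux hp (Quiver.Path.length (V := Vert p) f₁) X Y f₁ f₂ rfl hl h'
    · intro α
      obtain ⟨f, hf⟩ := surj_aux hp (Quiver.Path.length (p.map α)) X Y α rfl
      exact ⟨f, hf⟩
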